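/- arXiv:1210.2017 — 2 statements merged into one kernel-verified Lean document; each statement's English description precedes it below -/
import Mathlib

section
/- Let E₀, and vectors c, c', J ∈ ℝ³ be real quantities with E₀ ≥ |c| and E₀ ≥ (1/2)√(2(|c'|² + |J|²)). If 2E₀(E₀² − |c|²) − 2E₀(|c'|² + |J|²) + 4|c||c' × J| ≥ 0, then E₀ ≥ √((|c'|² + |J|²) + 2|c|²) − |c|. -/
noncomputable def norm3 (v : Fin 3 → ℝ) : ℝ :=
  Real.sqrt (v 0 ^ 2 + v 1 ^ 2 + v 2 ^ 2)

def cross3 (u v : Fin 3 → ℝ) : Fin 3 → ℝ :=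
  ![u 1 * v 2 - u 2 * v 1, u 2 * v 0 - u 0 * v 2, u 0 * v 1 - u 1 * v 0]

lemma aux_key (E a s : ℝ) (ha : 0 ≤ a) (h1 : a ≤ E) (h2 : s ≤ 2 * E ^ 2)
    (hP : 0 ≤ (E - a) * (E ^ 2 + a * E - s)) : s + 2 * a ^ 2 ≤ (E + a) ^ 2 := by
  rcases h1.lt_or_eq with ht | ht
  · have hu : 0 ≤ E ^ 2 + a * E - s := by nlinarith
    nlinarith [mul_nonneg ha (sub_nonneg.2 h1)]
  · nlinarith

/-- the key algebraic step giving the first lower bound on the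
total energy in the positive energy theorem for asymptotically AdS initial data. -/
theorem first_energy_lower_bound (E₀ : ℝ) (c c' J : Fin 3 → ℝ)
    (h1 : E₀ ≥ norm3 c)
    (h2 : E₀ ≥ (1 / 2) * Real.sqrt (2 * (norm3 c' ^ 2 + norm3 J ^ 2)))
    (h3 : 2 * E₀ * (E₀ ^ 2 - norm3 c ^ 2) - 2 * E₀ * (norm3 c' ^ 2 + norm3 J ^ 2)
          + 4 * norm3 c * norm3 (cross3 c' J) ≥ 0) :
    E₀ ≥ Real.sqrt ((norm3 c' ^ 2 + norm3 J ^ 2) + 2 * norm3 c ^ 2) - norm3 c := by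
  set a := norm3 c with hadef
  set p := norm3 c' with hpdef
  set q := norm3 J with hqdef
  set x := norm3 (cross3 c' J) with hxdef
  have ha : 0 ≤ a := Real.sqrt_nonneg _
  have hp : 0 ≤ p := Real.sqrt_nonneg _
  have hq : 0 ≤ q := Real.sqrt_nonneg _
  have hx : 0 ≤ x := Real.sqrt_nonneg _
  have hp2 : p ^ 2 = c' 0 ^ 2 + c' 1 ^ 2 + c' 2 ^ 2 := Real.sq_sqrt (by positivity)
  have hq2 : q ^ 2 = J 0 ^ 2 + J 1 ^ 2 + J 2 ^ 2 := Real.sq_sqrt (by positivity)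
  have hx2 : x ^ 2 = (c' 1 * J 2 - c' 2 * J 1) ^ 2 + (c' 2 * J 0 - c' 0 * J 2) ^ 2
      + (c' 0 * J 1 - c' 1 * J 0) ^ 2 := by
    rw [hxdef, norm3]
    simp only [cross3, Matrix.cons_val_zero, Matrix.cons_val_one, Matrix.head_cons,
      Matrix.cons_val_two, Matrix.tail_cons]
    exact Real.sq_sqrt (by positivity)
  have hlag : x ^ 2 ≤ p ^ 2 * q ^ 2 := by
    nlinarith [sq_nonneg (c' 0 * J 0 + c' 1 * J 1 + c' 2 * J 2)]
  have hxpq : x ≤ p * q := by nlinarith [mul_nonneg hp hq]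
  have hxs : x ≤ (p ^ 2 + q ^ 2) / 2 := by nlinarith [sq_nonneg (p - q)]
  have hs : 0 ≤ 2 * (p ^ 2 + q ^ 2) := by positivity
  have h2a : Real.sqrt (2 * (p ^ 2 + q ^ 2)) ≤ 2 * E₀ := by linarith
  have h2b : Real.sqrt (2 * (p ^ 2 + q ^ 2)) ^ 2 ≤ (2 * E₀) ^ 2 :=
    pow_le_pow_left₀ (Real.sqrt_nonneg _) h2a 2
  rw [Real.sq_sqrt hs] at h2b
  have h2' : p ^ 2 + q ^ 2 ≤ 2 * E₀ ^ 2 := by linarith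
  have hP : 0 ≤ (E₀ - a) * (E₀ ^ 2 + a * E₀ - (p ^ 2 + q ^ 2)) := by
    have t : 0 ≤ a * ((p ^ 2 + q ^ 2) / 2 - x) := mul_nonneg ha (by linarith)
    linarith [h3, t]
  have h1' : a ≤ E₀ := h1
  have key : (p ^ 2 + q ^ 2) + 2 * a ^ 2 ≤ (E₀ + a) ^ 2 :=
    aux_key E₀ a (p ^ 2 + q ^ 2) ha h1' h2' hP
  have hE : 0 ≤ E₀ + a := by linarith
  have := Real.sqrt_le_sqrt key
  rw [Real.sqrt_sq hE] at this
  linarith [this]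
end

section
/- Let E₀, b₀, q ∈ ℝ and c, b, c', J ∈ ℝ³, and suppose the following hold: E₀ ≥ 0, E₀² ≥ b₀² + (1/2)(|c'|² + |J|² + q²), and E₀² ≥ (1/2)(|c|² + |b|²) + (1/4)(|c'|² + |J|² + q²). Define A = b₀² + |c|² + |b|² + |c'|² + |J|² + q². If additionally E₀(E₀² − A) + 2E₀|b||c| + 2|q||b||J| + 2|c||c'×J| ≥ 0, then E₀ ≥ (A + |b|² + |c|²)^{1/2} − |b| − |c|. -/
set_option maxHeartbeats 1000000


lemma norm3_nonneg (v : Fin 3 → ℝ) : 0 ≤ norm3 v := Real.sqrt_nonneg _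

lemma norm3_sq (v : Fin 3 → ℝ) : norm3 v ^ 2 = v 0 ^ 2 + v 1 ^ 2 + v 2 ^ 2 := by
  rw [norm3, Real.sq_sqrt] ; positivity

lemma cross3_le (u v : Fin 3 → ℝ) : norm3 (cross3 u v) ≤ norm3 u * norm3 v := by
  have h1 := norm3_nonneg (cross3 u v)
  have h2 := norm3_nonneg u
  have h3 := norm3_nonneg v
  have hsq : norm3 (cross3 u v) ^ 2 ≤ (norm3 u * norm3 v) ^ 2 := by
    have e1 := norm3_sq (cross3 u v)
    have e2 := norm3_sq u
    have e3 := norm3_sq v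
    rw [mul_pow, e2, e3, e1]
    simp only [cross3, Matrix.cons_val_zero, Matrix.cons_val_one, Matrix.head_cons,
      Matrix.cons_val_two, Matrix.tail_cons]
    nlinarith [sq_nonneg (u 0 * v 0 + u 1 * v 1 + u 2 * v 2)]
  have := Real.sqrt_le_sqrt hsq
  rwa [Real.sqrt_sq h1, Real.sqrt_sq (mul_nonneg h2 h3)] at this

/-- the third lower bound in Theorem 5.2 (positive energy theorem for
asymptotically AdS Einstein–Maxwell initial data), extracted algebraically. -/
theorem third_energy_lower_bound (E₀ b₀ q : ℝ) (c b c' J : Fin 3 → ℝ) (A : ℝ)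
    (hE₀ : E₀ ≥ 0)
    (h1 : E₀ ^ 2 ≥ b₀ ^ 2 + (1 / 2) * (norm3 c' ^ 2 + norm3 J ^ 2 + q ^ 2))
    (h2 : E₀ ^ 2 ≥ (1 / 2) * (norm3 c ^ 2 + norm3 b ^ 2)
          + (1 / 4) * (norm3 c' ^ 2 + norm3 J ^ 2 + q ^ 2))
    (hA : A = b₀ ^ 2 + norm3 c ^ 2 + norm3 b ^ 2 + norm3 c' ^ 2 + norm3 J ^ 2 + q ^ 2)
    (h3 : E₀ * (E₀ ^ 2 - A) + 2 * E₀ * norm3 b * norm3 c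
          + 2 * |q| * norm3 b * norm3 J + 2 * norm3 c * norm3 (cross3 c' J) ≥ 0) :
    E₀ ≥ Real.sqrt (A + norm3 b ^ 2 + norm3 c ^ 2) - norm3 b - norm3 c := by
  set β := norm3 b with hβ
  set γ := norm3 c with hγ
  have hβ0 : 0 ≤ β := norm3_nonneg b
  have hγ0 : 0 ≤ γ := norm3_nonneg c
  have hc'0 : 0 ≤ norm3 c' := norm3_nonneg c'
  have hJ0 : 0 ≤ norm3 J := norm3_nonneg J
  have hq0 : 0 ≤ |q| := abs_nonneg q
  have hq2 : |q| ^ 2 = q ^ 2 := sq_abs q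
  -- key: A ≤ E₀^2 + 2E₀β + 2E₀γ + 2βγ
  have key : A ≤ E₀ ^ 2 + 2 * E₀ * β + 2 * E₀ * γ + 2 * β * γ := by
    rcases eq_or_lt_of_le hE₀ with hE | hE
    · -- E₀ = 0
      have hE' : E₀ = 0 := hE.symm
      subst hE'
      nlinarith [mul_nonneg hβ0 hγ0, sq_nonneg b₀, sq_nonneg q, sq_nonneg (norm3 c'),
        sq_nonneg (norm3 J)]
    · have hcross := cross3_le c' J
      have hcross0 := norm3_nonneg (cross3 c' J)
      have hqJ : |q| * norm3 J ≤ E₀ ^ 2 := by nlinarith [sq_nonneg (|q| - norm3 J), sq_nonneg b₀]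
      have hcJ : norm3 (cross3 c' J) ≤ E₀ ^ 2 := by nlinarith [sq_nonneg (norm3 c' - norm3 J), sq_nonneg b₀, sq_nonneg q]
      have hmul : 0 ≤ E₀ * (E₀ ^ 2 - A + 2 * E₀ * β + 2 * E₀ * γ + 2 * β * γ) := by
        nlinarith [mul_le_mul_of_nonneg_left hqJ hβ0, mul_le_mul_of_nonneg_left hcJ hγ0]
      have hX := (mul_nonneg_iff_of_pos_left hE).mp hmul
      linarith
  have hrhs : 0 ≤ E₀ + β + γ := by linarith
  have hsqrt : Real.sqrt (A + β ^ 2 + γ ^ 2) ≤ E₀ + β + γ := by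
    rw [show E₀ + β + γ = Real.sqrt ((E₀ + β + γ) ^ 2) from (Real.sqrt_sq hrhs).symm]
    apply Real.sqrt_le_sqrt
    nlinarith [key]
  linarith
end
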